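/- arXiv:1803.07953 — 11 statements merged into one kernel-verified Lean document; each statement's English description precedes it below -/
import Mathlib

section
/- Let C be a commutative ring and let A be a commutative C-algebra that is 2-torsion free (i.e., 2a = 0 implies a = 0 for a ∈ A). If f, g, h : A → A are C-linear maps and f is a Jordan left {g,h}-derivation, then f is a left {g,h}-derivation. -/
/-- If `A` is a commutative 2-torsion free algebra over a commutative ring `C`,
then every Jordan left `{g,h}`-derivation on `A` is a left `{g,h}`-derivation. -/
theorem jordan_left_gh_derivation_of_comm_two_torsion_free
    {C A : Type*} [CommRing C] [CommRing A] [Algebra C A]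
    (htf : ∀ a : A, 2 • a = 0 → a = 0)
    (f g h : A →ₗ[C] A)
    (hf : ∀ a b : A, f (a * b + b * a) = 2 • (a * g b + b * h a)) :
    ∀ a b : A, f (a * b) = a * g b + b * h a ∧ f (a * b) = a * h b + b * g a := by
  have key : ∀ a b : A, f (a * b) = a * g b + b * h a := by
    intro a b
    have h1 := hf a b
    rw [mul_comm b a] at h1
    have h2 : f (a * b + a * b) = f (a * b) + f (a * b) := map_add f _ _
    rw [← sub_eq_zero]
    apply htf
    have : (2 : ℕ) • f (a * b) = 2 • (a * g b + b * h a) := by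
      rw [two_smul]; rw [← h2]; exact h1
    rw [smul_sub, this, sub_self]
  intro a b
  refine ⟨key a b, ?_⟩
  have := key b a
  rwa [mul_comm b a, add_comm] at this
end

section
/- Let C be a 2-torsion free commutative ring with unity, let n ≥ 2, and let T_n(C) denote the algebra of n×n upper triangular matrices over C. Linear maps f, g, h : T_n(C) → T_n(C) form a Jordan left {g,h}-derivation triple (i.e., f is a Jordan left {g,h}-derivation) if and only if there exist upper triangular matrices α, β ∈ T_n(C) such that β − α has all entries outside the first row equal to zero, g(A) = Aα and h(A) = Aβ for all A ∈ T_n(C), and f = g + h. -/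
/-- The algebra `T_n(C)` of `n × n` upper triangular matrices over `C`,
as a subalgebra of `Matrix (Fin n) (Fin n) C`. -/
def upperTriangularAlgebra (n : ℕ) (C : Type*) [CommRing C] :
    Subalgebra C (Matrix (Fin n) (Fin n) C) where
  carrier := {A | A.BlockTriangular (id : Fin n → Fin n)}
  mul_mem' ha hb := ha.mul hb
  add_mem' ha hb := ha.add hb
  algebraMap_mem' r := by
    intro i j hij
    have hij' : i ≠ j := ne_of_gt hij
    rw [Matrix.algebraMap_matrix_apply, if_neg hij']

namespace JordanAux

variable {C : Type*} [CommRing C] {n : ℕ}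

/-- Matrix units in the upper triangular algebra (zero when `¬ i ≤ j`). -/
def utE (i j : Fin n) : upperTriangularAlgebra n C :=
  if hij : i ≤ j then
    ⟨Matrix.single i j 1, by
      intro r s hrs
      apply Matrix.single_apply_of_ne
      rintro ⟨rfl, rfl⟩
      exact absurd hij (not_le.mpr hrs)⟩
  else 0

lemma utE_val {i j : Fin n} (h : i ≤ j) :
    (utE (C := C) i j).val = Matrix.single i j 1 := by
  rw [utE, dif_pos h]

lemma utE_mul_same {i j k : Fin n} (hij : i ≤ j) (hjk : j ≤ k) :
    (utE i j : upperTriangularAlgebra n C) * utE j k = utE i k := by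
  apply Subtype.ext
  rw [MulMemClass.coe_mul, utE_val hij, utE_val hjk, utE_val (hij.trans hjk),
    Matrix.single_mul_single_same, one_mul]

lemma utE_mul_ne {i j k l : Fin n} (hij : i ≤ j) (hkl : k ≤ l) (hjk : j ≠ k) :
    (utE i j : upperTriangularAlgebra n C) * utE k l = 0 := by
  apply Subtype.ext
  rw [MulMemClass.coe_mul, utE_val hij, utE_val hkl,
    Matrix.single_mul_single_of_ne (h := hjk)]
  rfl

lemma two_smul_inj (htf : ∀ c : C, 2 • c = 0 → c = 0)
    {x y : upperTriangularAlgebra n C} (hxy : 2 • x = 2 • y) : x = y := by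
  have h0 : x + x = y + y := by
    have := hxy; rwa [two_smul, two_smul] at this
  have h1 := congrArg Subtype.val h0
  simp only [AddMemClass.coe_add] at h1
  apply Subtype.ext
  ext r s
  rw [← sub_eq_zero]
  apply htf
  have h3 := congrArg (fun M : Matrix (Fin n) (Fin n) C => M r s) h1
  simp only [Matrix.add_apply] at h3
  rw [two_smul]
  linear_combination h3

lemma eq_sum_utE (A : upperTriangularAlgebra n C) :
    A = ∑ p : Fin n × Fin n, A.val p.1 p.2 • utE p.1 p.2 := by
  apply Subtype.ext
  rw [AddSubmonoidClass.coe_finset_sum]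
  calc A.val = ∑ i, ∑ j, Matrix.single i j (A.val i j) :=
        Matrix.matrix_eq_sum_single _
    _ = ∑ p : Fin n × Fin n, Matrix.single p.1 p.2 (A.val p.1 p.2) :=
        (Fintype.sum_prod_type' _).symm
    _ = _ := by
        refine Finset.sum_congr rfl fun p _ => ?_
        by_cases hp : p.1 ≤ p.2
        · rw [SetLike.val_smul, utE_val hp, Matrix.smul_single,
            smul_eq_mul, mul_one]
        · have h0 : A.val p.1 p.2 = 0 := A.2 (not_le.mp hp)
          rw [h0, Matrix.single_zero, SetLike.val_smul, zero_smul]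

lemma mul_apply_col_zero [NeZero n] {N : Matrix (Fin n) (Fin n) C}
    (hN : N.BlockTriangular id) (M : Matrix (Fin n) (Fin n) C) (r : Fin n) :
    (M * N) r 0 = M r 0 * N 0 0 := by
  rw [Matrix.mul_apply]
  apply Finset.sum_eq_single
  · intro m _ hm
    have hm0 : (0 : Fin n) < m := lt_of_le_of_ne (Fin.zero_le m) (Ne.symm hm)
    have : N m 0 = 0 := hN hm0
    rw [this, mul_zero]
  · intro hmem
    exact absurd (Finset.mem_univ _) hmem

end JordanAux

set_option maxHeartbeats 4000000 in
set_option synthInstance.maxHeartbeats 1000000 in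
/-- characterization of Jordan left `{g,h}`-derivations on `T_n(C)`. -/
theorem jordan_left_gh_derivation_upperTriangular_iff
    {C : Type*} [CommRing C] (htf : ∀ c : C, 2 • c = 0 → c = 0)
    (n : ℕ) (hn : 2 ≤ n)
    (f g h : upperTriangularAlgebra n C →ₗ[C] upperTriangularAlgebra n C) :
    (∀ A B : upperTriangularAlgebra n C,
        f (A * B + B * A) = 2 • (A * g B + B * h A)) ↔
      ∃ α β : upperTriangularAlgebra n C,
        (∀ i j : Fin n, (i : ℕ) ≠ 0 → ((β : Matrix (Fin n) (Fin n) C) -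
          (α : Matrix (Fin n) (Fin n) C)) i j = 0) ∧
        (∀ A : upperTriangularAlgebra n C, g A = A * α) ∧
        (∀ A : upperTriangularAlgebra n C, h A = A * β) ∧
        f = g + h := by
  open JordanAux in
  haveI : NeZero n := ⟨by omega⟩
  constructor
  · intro J
    set α := g 1 with hα
    set β := h 1 with hβ
    have hg : ∀ B, g B = f B - B * β := by
      intro B
      have hJ := J 1 B
      simp only [one_mul, mul_one, ← hβ] at hJ
      have h2 : 2 • f B = 2 • (g B + B * β) := by
        rw [two_smul, ← map_add, hJ]
      have h3 := two_smul_inj htf h2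
      exact eq_sub_iff_add_eq.mpr h3.symm
    have hh : ∀ A, h A = f A - A * α := by
      intro A
      have hJ := J A 1
      simp only [one_mul, mul_one, ← hα] at hJ
      have h2 : 2 • f A = 2 • (A * α + h A) := by
        rw [two_smul, ← map_add, hJ]
      have h3 := two_smul_inj htf h2
      rw [eq_sub_iff_add_eq, add_comm]
      exact h3.symm
    set Dm : upperTriangularAlgebra n C →ₗ[C] upperTriangularAlgebra n C :=
      f - LinearMap.mulRight C (α + β) with hDm
    have hDdef : ∀ X, Dm X = f X - X * (α + β) := by
      intro X
      rw [hDm, LinearMap.sub_apply, LinearMap.mulRight_apply]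
    have P : ∀ A B : upperTriangularAlgebra n C,
        Dm (A * B + B * A) = 2 • (A * Dm B) + 2 • (B * Dm A)
          + (A * B - B * A) * (α - β) := by
      intro A B
      have hJ := J A B
      rw [hg B, hh A] at hJ
      simp only [hDdef]
      rw [hJ]
      simp only [two_smul, mul_sub, sub_mul, mul_add, add_mul, mul_assoc]
      abel
    have hDii : ∀ i : Fin n, Dm (utE i i) = 0 := by
      intro i
      have hP := P (utE i i) (utE i i)
      rw [utE_mul_same le_rfl le_rfl, sub_self, zero_mul, add_zero,
        ← two_smul ℕ, map_nsmul] at hP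
      have h1 : Dm (utE i i) = 2 • (utE i i * Dm (utE i i)) := by
        apply two_smul_inj htf
        rw [hP]
        exact (two_smul ℕ _).symm
      have h3 : utE i i * Dm (utE i i)
          = 2 • (utE i i * Dm (utE i i)) := by
        conv_lhs => rw [h1]
        rw [mul_smul_comm, ← mul_assoc, utE_mul_same le_rfl le_rfl]
      have h2 : utE i i * Dm (utE i i) = 0 :=
        (right_eq_add.mp (h3.trans (two_smul ℕ _)))
      rw [h1, h2, smul_zero]
    have hDij : ∀ i j : Fin n, i < j →
        utE i j * (α - β) = 0 ∧ Dm (utE (C := C) i j) = 0 := by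
      intro i j hij
      have h1 := P (utE i j) (utE j j)
      rw [utE_mul_same hij.le le_rfl, utE_mul_ne le_rfl hij.le hij.ne',
        add_zero, sub_zero, hDii j, mul_zero, smul_zero, zero_add] at h1
      have h2 := P (utE j j) (utE i j)
      rw [utE_mul_same hij.le le_rfl, utE_mul_ne le_rfl hij.le hij.ne',
        zero_add, zero_sub, hDii j, mul_zero, smul_zero, add_zero] at h2
      have h4 : utE i j * (α - β) = (-utE i j) * (α - β) :=
        add_left_cancel (h1.symm.trans h2)
      have h5 : 2 • (utE i j * (α - β)) = 2 • (0 : upperTriangularAlgebra n C) := by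
        rw [smul_zero, two_smul]
        calc utE i j * (α - β) + utE i j * (α - β)
            = utE i j * (α - β) + (-utE i j) * (α - β) := by rw [← h4]
          _ = (utE i j + -utE i j) * (α - β) := (add_mul _ _ _).symm
          _ = 0 * (α - β) := by rw [add_neg_cancel]
          _ = 0 := zero_mul _
      have hEδ : utE i j * (α - β) = 0 := two_smul_inj htf h5
      have hEδn : (-utE i j) * (α - β) = 0 := by rw [← h4]; exact hEδ
      rw [hEδ, add_zero] at h1
      have h3 := P (utE i j) (utE i i)
      rw [utE_mul_ne hij.le le_rfl hij.ne', utE_mul_same le_rfl hij.le,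
        zero_add, hDii i, mul_zero, smul_zero, zero_add, zero_sub] at h3
      rw [hEδn, add_zero] at h3
      have h6 : utE i i * Dm (utE (C := C) i j) = 0 := by
        conv_lhs => rw [h1]
        rw [mul_smul_comm, ← mul_assoc, utE_mul_ne le_rfl le_rfl hij.ne,
          zero_mul, smul_zero]
      refine ⟨hEδ, ?_⟩
      rw [h3, h6, smul_zero]
    have hD0 : ∀ A, Dm A = 0 := by
      intro A
      conv_lhs => rw [eq_sum_utE A]
      rw [map_sum]
      refine Finset.sum_eq_zero fun p _ => ?_
      rw [map_smul]
      have hz : Dm (utE p.1 p.2) = 0 := by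
        rcases lt_trichotomy p.1 p.2 with hlt | heq | hgt
        · exact (hDij _ _ hlt).2
        · rw [← heq]; exact hDii p.1
        · rw [utE, dif_neg (not_le.mpr hgt), map_zero]
      rw [hz, smul_zero]
    have hfA : ∀ A, f A = A * (α + β) := by
      intro A
      have h0 := hD0 A
      rw [hDdef] at h0
      exact sub_eq_zero.mp h0
    have hδrow : ∀ j k : Fin n, (j : ℕ) ≠ 0 → (α.val - β.val) j k = 0 := by
      intro j k hj
      have h0j : (0 : Fin n) < j := lt_of_le_of_ne (Fin.zero_le j) (by
        intro h0; rw [← h0] at hj; exact hj rfl)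
      have hE := (hDij 0 j h0j).1
      have hval := congrArg Subtype.val hE
      rw [MulMemClass.coe_mul, utE_val h0j.le] at hval
      have h2 := congrArg (fun M : Matrix (Fin n) (Fin n) C => M 0 k) hval
      simp only [Matrix.single_mul_apply_same, one_mul,
        Matrix.zero_apply] at h2
      rw [← AddSubgroupClass.coe_sub]
      rw [AddSubgroupClass.coe_sub] at h2
      exact h2
    have hgα : ∀ A, g A = A * α := fun A => by
      rw [hg A, hfA A, mul_add, add_sub_cancel_right]
    have hhβ : ∀ A, h A = A * β := fun A => by
      rw [hh A, hfA A, mul_add, add_sub_cancel_left]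
    refine ⟨α, β, ?_, hgα, hhβ, ?_⟩
    · intro i j hi
      have h0 := hδrow i j hi
      simp only [Matrix.sub_apply] at h0 ⊢
      linear_combination -h0
    · apply LinearMap.ext
      intro A
      rw [LinearMap.add_apply, hgα A, hhβ A, hfA A, mul_add]
  · rintro ⟨α, β, hrow, hg, hh, hf⟩
    subst hf
    intro A B
    have key : (A * B) * (β - α) = (B * A) * (β - α) := by
      apply Subtype.ext
      simp only [MulMemClass.coe_mul, AddSubgroupClass.coe_sub]
      ext r k
      rw [Matrix.mul_apply, Matrix.mul_apply]
      rw [Finset.sum_eq_single (0 : Fin n), Finset.sum_eq_single (0 : Fin n)]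
      · have hAB : (A.val * B.val) r 0 = A.val r 0 * B.val 0 0 :=
          mul_apply_col_zero B.2 _ r
        have hBA : (B.val * A.val) r 0 = B.val r 0 * A.val 0 0 :=
          mul_apply_col_zero A.2 _ r
        rw [hAB, hBA]
        by_cases hr : r = 0
        · subst hr; ring_nf
        · rw [A.2 (lt_of_le_of_ne (Fin.zero_le r) (Ne.symm hr)),
            B.2 (lt_of_le_of_ne (Fin.zero_le r) (Ne.symm hr))]
          simp
      · intro m _ hm
        have : (β.val - α.val) m k = 0 := hrow m k (by
          intro h0
          exact hm (Fin.ext h0))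
        rw [this, mul_zero]
      · intro hmem; exact absurd (Finset.mem_univ _) hmem
      · intro m _ hm
        have : (β.val - α.val) m k = 0 := hrow m k (by
          intro h0
          exact hm (Fin.ext h0))
        rw [this, mul_zero]
      · intro hmem; exact absurd (Finset.mem_univ _) hmem
    rw [LinearMap.add_apply, hg, hh, hg B, hh A]
    simp only [two_smul]
    rw [← sub_eq_zero]
    have expand : (A * B + B * A) * α + (A * B + B * A) * β
        - (A * (B * α) + B * (A * β) + (A * (B * α) + B * (A * β)))
        = (A * B) * (β - α) - (B * A) * (β - α) := by
      simp only [mul_sub, sub_mul, mul_add, add_mul, mul_assoc]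
      abel
    rw [expand, key, sub_self]
end

section
/- Let C be a 2-torsion free commutative ring with unity, let n ≥ 2, and let T_n(C) denote the algebra of n×n upper triangular matrices over C. Linear maps f, g, h : T_n(C) → T_n(C) form a left {g,h}-derivation triple (i.e., f is a left {g,h}-derivation) if and only if there exist matrices γ, δ ∈ T_n(C) whose entries outside the first row are all zero such that g(A) = Aγ and h(A) = Aδ for all A ∈ T_n(C), and f = g + h. -/
set_option maxHeartbeats 1000000
set_option synthInstance.maxHeartbeats 400000

open Matrix

section Aux

variable {C : Type*} [CommRing C] {n : ℕ}

lemma ut_mem_iff {M : Matrix (Fin n) (Fin n) C} :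
    M ∈ upperTriangularAlgebra n C ↔ M.BlockTriangular (id : Fin n → Fin n) :=
  Iff.rfl

lemma ut_stdBasis_mem {i j : Fin n} (hij : i ≤ j) :
    Matrix.single i j (1 : C) ∈ upperTriangularAlgebra n C := by
  rw [ut_mem_iff]
  intro a b hab
  rw [Matrix.single, Matrix.of_apply, if_neg]
  rintro ⟨rfl, rfl⟩
  exact absurd hij (not_le.mpr hab)

/-- The matrix unit `E_{ij}` as an element of the upper triangular algebra. -/
def utU (i j : Fin n) (hij : i ≤ j) : upperTriangularAlgebra n C :=
  ⟨Matrix.single i j 1, ut_stdBasis_mem hij⟩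

lemma utU_mul_same (i j k : Fin n) (h1 : i ≤ j) (h2 : j ≤ k) :
    (utU i j h1 : upperTriangularAlgebra n C) * utU j k h2 = utU i k (h1.trans h2) := by
  apply Subtype.ext
  simp [utU, Matrix.single_mul_single_same]

lemma utU_mul_ne (i j k l : Fin n) (h1 : i ≤ j) (h2 : k ≤ l) (hjk : j ≠ k) :
    (utU i j h1 : upperTriangularAlgebra n C) * utU k l h2 = 0 := by
  apply Subtype.ext
  simp only [MulMemClass.coe_mul, ZeroMemClass.coe_zero, utU]
  exact Matrix.single_mul_single_of_ne 1 i j k hjk 1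

lemma ut_eq_sum (A : upperTriangularAlgebra n C) :
    A = ∑ i : Fin n, ∑ j : Fin n,
      (if h : i ≤ j then ((A : Matrix (Fin n) (Fin n) C) i j) • utU i j h else 0) := by
  apply Subtype.ext
  have hA := A.2
  rw [ut_mem_iff] at hA
  push_cast [AddSubmonoidClass.coe_finset_sum]
  conv_lhs => rw [matrix_eq_sum_single (A : Matrix (Fin n) (Fin n) C)]
  refine Finset.sum_congr rfl fun i _ => Finset.sum_congr rfl fun j _ => ?_
  by_cases hij : i ≤ j
  · rw [dif_pos hij]
    simp [utU, smul_single]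
  · rw [dif_neg hij]
    have : (A : Matrix (Fin n) (Fin n) C) i j = 0 := hA (not_le.mp hij)
    simp [this]

/-- Multiplication of a triangular matrix by a first-row supported matrix. -/
lemma ut_mul_firstRow (hnz : 0 < n) (M P : Matrix (Fin n) (Fin n) C)
    (hM : M.BlockTriangular (id : Fin n → Fin n))
    (hP : ∀ i j : Fin n, (i : ℕ) ≠ 0 → P i j = 0) :
    M * P = M ⟨0, hnz⟩ ⟨0, hnz⟩ • P := by
  ext a b
  rw [Matrix.mul_apply]
  rw [Finset.sum_eq_single (⟨0, hnz⟩ : Fin n)]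
  · by_cases ha : a = ⟨0, hnz⟩
    · subst ha; simp
    · have ha' : (a : ℕ) ≠ 0 := fun hc => ha (Fin.ext hc)
      have h1 : M a ⟨0, hnz⟩ = 0 := hM (by simpa [Fin.lt_def] using Nat.pos_of_ne_zero ha')
      have h2 : P a b = 0 := hP a b ha'
      simp [h1, h2]
  · intro k _ hk
    have hk' : (k : ℕ) ≠ 0 := fun hc => hk (Fin.ext hc)
    rw [hP k b hk', mul_zero]
  · intro hmem
    exact absurd (Finset.mem_univ _) hmem

lemma ut_entry_zero_mul (hnz : 0 < n) (M N : Matrix (Fin n) (Fin n) C)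
    (hN : N.BlockTriangular (id : Fin n → Fin n)) :
    (M * N) ⟨0, hnz⟩ ⟨0, hnz⟩ = M ⟨0, hnz⟩ ⟨0, hnz⟩ * N ⟨0, hnz⟩ ⟨0, hnz⟩ := by
  rw [Matrix.mul_apply]
  rw [Finset.sum_eq_single (⟨0, hnz⟩ : Fin n)]
  · intro k _ hk
    have hk' : (k : ℕ) ≠ 0 := fun hc => hk (Fin.ext hc)
    have : N k ⟨0, hnz⟩ = 0 := hN (by simpa [Fin.lt_def] using Nat.pos_of_ne_zero hk')
    rw [this, mul_zero]
  · intro hmem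
    exact absurd (Finset.mem_univ _) hmem

/-- For a first-row supported `δ`, right multiplication kills commutators. -/
lemma ut_comm_mul (hnz : 0 < n) (δ : upperTriangularAlgebra n C)
    (hδ : ∀ i j : Fin n, (i : ℕ) ≠ 0 → (δ : Matrix (Fin n) (Fin n) C) i j = 0)
    (A B : upperTriangularAlgebra n C) :
    A * B * δ = B * A * δ := by
  apply Subtype.ext
  push_cast
  have hA := A.2; rw [ut_mem_iff] at hA
  have hB := B.2; rw [ut_mem_iff] at hB
  rw [ut_mul_firstRow hnz _ _ (hA.mul hB) hδ, ut_mul_firstRow hnz _ _ (hB.mul hA) hδ,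
    ut_entry_zero_mul hnz _ _ hB, ut_entry_zero_mul hnz _ _ hA, mul_comm]

end Aux

/-- characterization of left `{g,h}`-derivations on `T_n(C)`. -/
theorem left_gh_derivation_upperTriangular_iff
    {C : Type*} [CommRing C] (htf : ∀ c : C, 2 • c = 0 → c = 0)
    (n : ℕ) (hn : 2 ≤ n)
    (f g h : upperTriangularAlgebra n C →ₗ[C] upperTriangularAlgebra n C) :
    (∀ A B : upperTriangularAlgebra n C,
        f (A * B) = A * g B + B * h A ∧ f (A * B) = A * h B + B * g A) ↔
      ∃ γ δ : upperTriangularAlgebra n C,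
        (∀ i j : Fin n, (i : ℕ) ≠ 0 → (γ : Matrix (Fin n) (Fin n) C) i j = 0) ∧
        (∀ i j : Fin n, (i : ℕ) ≠ 0 → (δ : Matrix (Fin n) (Fin n) C) i j = 0) ∧
        (∀ A : upperTriangularAlgebra n C, g A = A * γ) ∧
        (∀ A : upperTriangularAlgebra n C, h A = A * δ) ∧
        f = g + h := by
  have hnz : 0 < n := by omega
  constructor
  · intro hyp
    -- abbreviations
    have hgA : ∀ A, g A = f A - A * h 1 := by
      intro A
      have h2 := (hyp A 1).2
      rw [mul_one, one_mul] at h2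
      exact (eq_sub_of_add_eq' h2.symm)
    have hhA : ∀ A, h A = f A - A * g 1 := by
      intro A
      have h1 := (hyp A 1).1
      rw [mul_one, one_mul] at h1
      exact (eq_sub_of_add_eq' h1.symm)
    set Dl : upperTriangularAlgebra n C →ₗ[C] upperTriangularAlgebra n C :=
      f - LinearMap.mulRight C (g 1 + h 1) with hDl
    have Dl_apply : ∀ X, Dl X = f X - X * (g 1 + h 1) := fun X => rfl
    have key : ∀ A B, Dl (A * B) = A * Dl B + B * Dl A + (B * A - A * B) * h 1 := by
      intro A B
      have h1 := (hyp A B).1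
      rw [hgA B, hhA A] at h1
      rw [Dl_apply, Dl_apply, Dl_apply, h1]
      simp only [mul_sub, sub_mul, mul_add, add_mul, mul_assoc]
      abel
    have keyγ : ∀ A B, Dl (A * B) = A * Dl B + B * Dl A + (B * A - A * B) * g 1 := by
      intro A B
      have h2 := (hyp A B).2
      rw [hhA B, hgA A] at h2
      rw [Dl_apply, Dl_apply, Dl_apply, h2]
      simp only [mul_sub, sub_mul, mul_add, add_mul, mul_assoc]
      abel
    have idem : ∀ e : upperTriangularAlgebra n C, e * e = e → Dl e = 0 := by
      intro e he
      have h1 := key e e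
      rw [he, sub_self, zero_mul, add_zero] at h1
      have h2 : e * Dl e + e * Dl e = e * Dl e := by
        conv_rhs => rw [h1]
        rw [mul_add, ← mul_assoc, he]
      have h3 : e * Dl e = 0 := add_eq_right.mp h2
      rw [h1, h3, add_zero]
    have Du : ∀ (i j : Fin n) (hij : i ≤ j), Dl (utU i j hij) = 0 := by
      intro i j hij
      rcases eq_or_lt_of_le hij with rfl | hlt
      · exact idem _ (utU_mul_same i i i le_rfl le_rfl)
      · have hii : Dl (utU i i le_rfl) = 0 := idem _ (utU_mul_same i i i le_rfl le_rfl)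
        have he : ((utU i i le_rfl : upperTriangularAlgebra n C) + utU i j hij) *
              ((utU i i le_rfl : upperTriangularAlgebra n C) + utU i j hij)
            = (utU i i le_rfl : upperTriangularAlgebra n C) + utU i j hij := by
          rw [mul_add, add_mul, add_mul, utU_mul_same i i i le_rfl le_rfl,
            utU_mul_same i i j le_rfl hij,
            utU_mul_ne i j i i hij le_rfl hlt.ne',
            utU_mul_ne i j i j hij hij hlt.ne', add_zero, add_zero]
        have := idem _ he
        rw [map_add, hii, zero_add] at this
        exact this
    have Dzero : ∀ A, Dl A = 0 := by
      intro A
      rw [ut_eq_sum A, map_sum]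
      refine Finset.sum_eq_zero fun i _ => ?_
      rw [map_sum]
      refine Finset.sum_eq_zero fun j _ => ?_
      by_cases hij : i ≤ j
      · rw [dif_pos hij, LinearMap.map_smul, Du i j hij, smul_zero]
      · rw [dif_neg hij, map_zero]
    have fA : ∀ A, f A = A * (g 1 + h 1) := by
      intro A
      have := Dzero A
      rw [Dl_apply, sub_eq_zero] at this
      exact this
    have hg' : ∀ A, g A = A * g 1 := by
      intro A
      rw [hgA A, fA A]
      noncomm_ring
    have hh' : ∀ A, h A = A * h 1 := by
      intro A
      rw [hhA A, fA A]
      noncomm_ring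
    have hcommδ : ∀ A B, (B * A - A * B) * h 1 = 0 := by
      intro A B
      have hc := key A B
      rw [Dzero, Dzero, Dzero, mul_zero, mul_zero, zero_add, zero_add] at hc
      exact hc.symm
    have hcommγ : ∀ A B, (B * A - A * B) * g 1 = 0 := by
      intro A B
      have hc := keyγ A B
      rw [Dzero, Dzero, Dzero, mul_zero, mul_zero, zero_add, zero_add] at hc
      exact hc.symm
    have supp : ∀ (x : upperTriangularAlgebra n C),
        (∀ A B, (B * A - A * B) * x = 0) →
        ∀ i j : Fin n, (i : ℕ) ≠ 0 →
          (x : Matrix (Fin n) (Fin n) C) i j = 0 := by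
      intro x hx i j hi
      set z : Fin n := ⟨0, hnz⟩ with hz
      have hzi : z ≤ i := by
        rw [Fin.le_def]
        exact Nat.zero_le _
      have hne : i ≠ z := fun hc => hi (by rw [hc])
      have hc := hx (utU z i hzi) (utU z z le_rfl)
      rw [utU_mul_same z z i le_rfl hzi, utU_mul_ne z i z z hzi le_rfl hne,
        sub_zero] at hc
      have h0 := congrArg Subtype.val hc
      simp only [MulMemClass.coe_mul, ZeroMemClass.coe_zero, utU] at h0
      have h1 := congrFun (congrFun h0 z) j
      rw [Matrix.single_mul_apply_same] at h1
      simpa using h1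
    refine ⟨g 1, h 1, supp _ hcommγ, supp _ hcommδ, hg', hh', ?_⟩
    apply LinearMap.ext
    intro A
    rw [LinearMap.add_apply, hg' A, hh' A, fA A, mul_add]
  · rintro ⟨γ, δ, hγ, hδ, hg, hh, hf⟩
    intro A B
    have e1 : f (A * B) = A * B * γ + A * B * δ := by
      rw [hf, LinearMap.add_apply, hg, hh]
    constructor
    · rw [e1, hg, hh, ← mul_assoc, ← mul_assoc, ut_comm_mul hnz δ hδ A B]
    · rw [e1, hg, hh, ← mul_assoc, ← mul_assoc, ut_comm_mul hnz γ hγ A B, add_comm]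
end

section
/- Let C be a 2-torsion free commutative ring with unity, let n ≥ 2, and let M_n(C) denote the algebra of n×n matrices over C. If f, g, h : M_n(C) → M_n(C) are linear maps such that f is a Jordan left {g,h}-derivation, then g = h. -/
/-- if `f` is a Jordan left `{g,h}`-derivation on the full matrix algebra
`M_n(C)` (with `C` 2-torsion free and `n ≥ 2`), then `g = h`. -/
theorem jordan_left_gh_derivation_matrix_g_eq_h
    {C : Type*} [CommRing C] (htf : ∀ c : C, 2 • c = 0 → c = 0)
    (n : ℕ) (hn : 2 ≤ n)
    (f g h : Matrix (Fin n) (Fin n) C →ₗ[C] Matrix (Fin n) (Fin n) C)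
    (hf : ∀ A B : Matrix (Fin n) (Fin n) C,
        f (A * B + B * A) = 2 • (A * g B + B * h A)) :
    g = h := by
  haveI : Nontrivial (Fin n) := Fin.nontrivial_iff_two_le.mpr hn
  -- key symmetric identity
  have key : ∀ A B : Matrix (Fin n) (Fin n) C,
      A * (g B - h B) = B * (g A - h A) := by
    intro A B
    have h1 := hf A B
    have h2 := hf B A
    rw [show B * A + A * B = A * B + B * A by abel] at h2
    have h3 : (2 : ℕ) • ((A * g B + B * h A) - (B * g A + A * h B)) = 0 := by
      rw [smul_sub, ← h1, ← h2, sub_self]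
    have h4 : (A * g B + B * h A) - (B * g A + A * h B) = 0 := by
      ext i j
      refine htf _ ?_
      have := congrFun (congrFun h3 i) j
      simpa using this
    have h5 : A * g B + B * h A = B * g A + A * h B := sub_eq_zero.mp h4
    calc A * (g B - h B) = (A * g B + B * h A) - (B * h A + A * h B) := by
          rw [mul_sub]; abel
      _ = (B * g A + A * h B) - (B * h A + A * h B) := by rw [h5]
      _ = B * (g A - h A) := by rw [mul_sub]; abel
  set d1 : Matrix (Fin n) (Fin n) C := g 1 - h 1 with hd1
  have hd : ∀ A, g A - h A = A * d1 := by
    intro A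
    have := key A 1
    simpa [hd1] using this.symm
  have hcomm : ∀ A B : Matrix (Fin n) (Fin n) C, A * B * d1 = B * A * d1 := by
    intro A B
    have := key A B
    rw [hd A, hd B, ← mul_assoc, ← mul_assoc] at this
    exact this
  have hz : d1 = 0 := by
    ext j k
    obtain ⟨i, hi⟩ := exists_ne j
    have := hcomm (Matrix.single i i 1) (Matrix.single i j 1)
    rw [Matrix.single_mul_single_same, Matrix.single_mul_single_of_ne (h := Ne.symm hi),
      zero_mul] at this
    have := congrFun (congrFun this i) k
    simpa using this
  have : ∀ A, g A = h A := by
    intro A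
    have := hd A
    rw [hz, mul_zero, sub_eq_zero] at this
    exact this
  exact LinearMap.ext this
end

section
/- Let C be a 2-torsion free commutative ring with unity, let n ≥ 2, and let M_n(C) denote the algebra of n×n matrices over C. Linear maps f, g : M_n(C) → M_n(C) are such that f is a Jordan left {g,g}-derivation if and only if there exists a matrix α ∈ M_n(C) such that g(A) = Aα and f(A) = 2Aα for all A ∈ M_n(C). In particular, if f is a Jordan left {g,g}-derivation then f and g are right centralizers. -/
open Matrix

/-- `f` is a Jordan left `{g,g}`-derivation on `M_n(C)` iff there is a matrix
`α` with `g A = A * α` and `f A = 2 • (A * α)`; in particular `f` and `g` are then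
right centralizers. -/
theorem jordan_left_gg_derivation_matrix_iff
    {C : Type*} [CommRing C] (htf : ∀ c : C, 2 • c = 0 → c = 0)
    (n : ℕ) (hn : 2 ≤ n)
    (f g : Matrix (Fin n) (Fin n) C →ₗ[C] Matrix (Fin n) (Fin n) C) :
    ((∀ A B : Matrix (Fin n) (Fin n) C,
        f (A * B + B * A) = 2 • (A * g B + B * g A)) ↔
      ∃ α : Matrix (Fin n) (Fin n) C,
        (∀ A : Matrix (Fin n) (Fin n) C, g A = A * α) ∧
        (∀ A : Matrix (Fin n) (Fin n) C, f A = 2 • (A * α))) ∧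
    ((∀ A B : Matrix (Fin n) (Fin n) C,
        f (A * B + B * A) = 2 • (A * g B + B * g A)) →
      (∀ A B : Matrix (Fin n) (Fin n) C, f (A * B) = A * f B) ∧
      (∀ A B : Matrix (Fin n) (Fin n) C, g (A * B) = A * g B)) := by
  -- cancellation of 2 • for matrices, from 2-torsion-freeness of C
  have htfM : ∀ X Y : Matrix (Fin n) (Fin n) C, 2 • X = 2 • Y → X = Y := by
    intro X Y hXY
    ext i j
    have h2 : (2 : ℕ) • (X i j - Y i j) = 0 := by
      have h := congrFun (congrFun hXY i) j
      simp only [Matrix.smul_apply] at h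
      rw [smul_sub, h, sub_self]
    exact sub_eq_zero.mp (htf _ h2)
  -- if x = 2 • (e_{ii} * x) then x = 0
  have hzero : ∀ (i : Fin n) (x : Matrix (Fin n) (Fin n) C),
      x = 2 • (single i i (1 : C) * x) → x = 0 := by
    intro i x hx
    ext k l
    have h := congrFun (congrFun hx k) l
    rw [Matrix.smul_apply] at h
    by_cases hk : k = i
    · subst hk
      rw [Matrix.single_mul_apply_same, one_mul, two_smul] at h
      exact left_eq_add.mp h
    · rw [Matrix.single_mul_apply_of_ne _ i i k l hk, smul_zero] at h
      simpa using h
  -- main forward direction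
  have main : (∀ A B : Matrix (Fin n) (Fin n) C,
      f (A * B + B * A) = 2 • (A * g B + B * g A)) →
      ∃ α : Matrix (Fin n) (Fin n) C,
        (∀ A : Matrix (Fin n) (Fin n) C, g A = A * α) ∧
        (∀ A : Matrix (Fin n) (Fin n) C, f A = 2 • (A * α)) := by
    intro H
    set α := g 1 with hα
    -- f A = A * α + g A
    have hf1 : ∀ A : Matrix (Fin n) (Fin n) C, f A = A * α + g A := by
      intro A
      apply htfM
      have e1 : f (A + A) = 2 • (A * α + g A) := by
        have := H A 1
        simpa using this
      rw [two_smul ℕ (f A), ← map_add, e1]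
    -- the "reduced" map h A = g A - A * α is a Jordan left {h,h}-derivation
    set h : Matrix (Fin n) (Fin n) C →ₗ[C] Matrix (Fin n) (Fin n) C :=
      g - LinearMap.mulRight C α with hh
    have hhapp : ∀ A : Matrix (Fin n) (Fin n) C, h A = g A - A * α := by
      intro A; simp [hh, LinearMap.mulRight_apply]
    have hkey : ∀ A B : Matrix (Fin n) (Fin n) C,
        h (A * B + B * A) = 2 • (A * h B + B * h A) := by
      intro A B
      have e := hf1 (A * B + B * A)
      rw [H A B] at e
      rw [hhapp, hhapp, hhapp]
      have e2 : g (A * B + B * A) = 2 • (A * g B + B * g A) - (A * B + B * A) * α := by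
        rw [eq_sub_iff_add_eq, add_comm]; exact e.symm
      rw [e2]
      simp only [two_smul]
      noncomm_ring
    -- h vanishes on all standard basis matrices
    have hbasis : ∀ i j : Fin n, h (single i j (1 : C)) = 0 := by
      -- first the diagonal ones
      have hdiag : ∀ i : Fin n, h (single i i (1 : C)) = 0 := by
        intro i
        apply hzero i
        have e := hkey (single i i (1 : C)) (single i i (1 : C))
        rw [Matrix.single_mul_single_same, one_mul] at e
        have e' : h (single i i (1:C) + single i i (1:C)) =
            h (single i i (1:C)) + h (single i i (1:C)) := map_add _ _ _
        rw [e'] at e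
        apply htfM
        rw [two_smul ℕ (h (single i i (1:C))), e]
        rw [two_smul ℕ (2 • (single i i (1:C) * h (single i i (1:C))))]
        simp only [smul_add]
      intro i j
      by_cases hij : i = j
      · subst hij; exact hdiag i
      · apply hzero i
        have e := hkey (single i i (1 : C)) (single i j (1 : C))
        rw [Matrix.single_mul_single_same, one_mul,
          Matrix.single_mul_single_of_ne _ _ _ _ (fun hji => hij (hji.symm)),
          add_zero, hdiag i, mul_zero, add_zero] at e
        exact e
    -- hence h = 0, i.e. g A = A * α
    have hg : ∀ A : Matrix (Fin n) (Fin n) C, g A = A * α := by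
      intro A
      have hA0 : h A = 0 := by
        conv_lhs => rw [Matrix.matrix_eq_sum_single A]
        rw [map_sum]
        refine Finset.sum_eq_zero fun i _ => ?_
        rw [map_sum]
        refine Finset.sum_eq_zero fun j _ => ?_
        have h1 : single i j (A i j) = (A i j) • single i j (1 : C) := by
          rw [Matrix.smul_single, smul_eq_mul, mul_one]
        rw [h1, h.map_smul, hbasis, smul_zero]
      have h2 := hhapp A
      rw [hA0] at h2
      exact sub_eq_zero.mp h2.symm
    refine ⟨α, hg, fun A => ?_⟩
    rw [hf1 A, hg A, two_smul]
  constructor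
  · constructor
    · exact main
    · rintro ⟨α, hg, hf⟩ A B
      rw [hf, hg, hg]
      simp only [add_mul, mul_assoc, smul_add]
  · intro H
    obtain ⟨α, hg, hf⟩ := main H
    constructor
    · intro A B
      rw [hf, hf, mul_smul_comm, mul_assoc]
    · intro A B
      rw [hg, hg, mul_assoc]
end

section
/- Let C be a 2-torsion free commutative ring with unity, let n ≥ 2, and let M_n(C) denote the algebra of n×n matrices over C. If f, g : M_n(C) → M_n(C) are linear maps such that f is a left {g,g}-derivation, then f = 0 and g = 0. -/
/-- if `f` is a left `{g,g}`-derivation on `M_n(C)` (with `C` 2-torsion free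
and `n ≥ 2`), then `f = 0` and `g = 0`. -/
theorem left_gg_derivation_matrix_eq_zero
    {C : Type*} [CommRing C] (htf : ∀ c : C, 2 • c = 0 → c = 0)
    (n : ℕ) (hn : 2 ≤ n)
    (f g : Matrix (Fin n) (Fin n) C →ₗ[C] Matrix (Fin n) (Fin n) C)
    (hf : ∀ A B : Matrix (Fin n) (Fin n) C,
        f (A * B) = A * g B + B * g A) :
    f = 0 ∧ g = 0 := by
  haveI : Nontrivial (Fin n) := Fin.nontrivial_iff_two_le.mpr hn
  set E : Fin n → Fin n → Matrix (Fin n) (Fin n) C :=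
    fun i j => Matrix.single i j (1 : C) with hE
  -- Step 1: rows of g (E k l) other than row k vanish.
  have step1 : ∀ k l j q : Fin n, j ≠ k → g (E k l) j q = 0 := by
    intro k l j q hjk
    obtain ⟨i, hik⟩ := exists_ne k
    have h0 := hf (E i j) (E k l)
    rw [show E i j * E k l = 0 from Matrix.single_mul_single_of_ne _ _ _ _ hjk _,
      map_zero] at h0
    have := congrArg (fun M : Matrix (Fin n) (Fin n) C => M i q) h0
    simp only [Matrix.zero_apply, Matrix.add_apply, hE,
      Matrix.single_mul_apply_same,
      Matrix.single_mul_apply_of_ne (h := hik), one_mul, add_zero] at this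
    exact this.symm
  -- Step 2: f (E l i) = 0 for l ≠ i.
  have fz : ∀ l i : Fin n, l ≠ i → f (E l i) = 0 := by
    intro l i hli
    have h1 := hf (E i i) (E l i)
    have h2 := hf (E l i) (E i i)
    rw [show E i i * E l i = 0 from Matrix.single_mul_single_of_ne _ _ _ _ hli.symm _,
      map_zero] at h1
    rw [show E l i * E i i = E l i by
      simp [hE]] at h2
    rw [h2, add_comm]
    exact h1.symm
  have gdiag : ∀ i : Fin n, g (E i i) = 0 := by
    intro i
    ext j q
    rcases ne_or_eq j i with hji | rfl
    · simpa using step1 i i j q hji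
    obtain ⟨l, hli⟩ := exists_ne j
    have h2 := hf (E l j) (E j j)
    rw [show E l j * E j j = E l j by
      simp [hE],
      fz l j hli] at h2
    have := congrArg (fun M : Matrix (Fin n) (Fin n) C => M l q) h2
    simp only [Matrix.zero_apply, Matrix.add_apply, hE,
      Matrix.single_mul_apply_same,
      Matrix.single_mul_apply_of_ne (h := hli), one_mul, add_zero] at this
    simpa using this.symm
  -- Step 3: g (E k l) = 0 for all k l.
  have gz : ∀ k l : Fin n, g (E k l) = 0 := by
    intro k l
    rcases eq_or_ne k l with rfl | hkl
    · exact gdiag k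
    ext j q
    rcases ne_or_eq j k with hjk | rfl
    · simpa using step1 k l j q hjk
    have h2 := hf (E j j) (E j l)
    rw [show E j j * E j l = E j l by
      simp [hE],
      fz j l hkl, gdiag j] at h2
    have := congrArg (fun M : Matrix (Fin n) (Fin n) C => M j q) h2
    simp only [Matrix.zero_apply, Matrix.add_apply, hE,
      Matrix.single_mul_apply_same, one_mul, Matrix.mul_zero,
      add_zero] at this
    simpa using this.symm
  -- g = 0 by linearity on the standard basis.
  have hgA : ∀ A, g A = 0 := by
    intro A
    rw [Matrix.matrix_eq_sum_single A, map_sum]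
    refine Finset.sum_eq_zero fun i _ => ?_
    rw [map_sum]
    refine Finset.sum_eq_zero fun j _ => ?_
    rw [show Matrix.single i j (A i j) = (A i j) • E i j by
      simp [hE, Matrix.smul_single, smul_eq_mul]]
    rw [map_smul, gz i j, smul_zero]
  have hg : g = 0 := LinearMap.ext fun A => by simp [hgA A]
  refine ⟨?_, hg⟩
  ext A : 1
  have := hf A 1
  rw [mul_one, hg] at this
  simpa using this
end

section
/- Let A be an algebra over a commutative ring C and let f, g, h : A → A be C-linear maps such that f is a left {g,h}-derivation. For a linear map F : A → A, let F̃ : A[x] → A[x] be the linear map applying F coefficientwise, i.e., the coefficient of x^n in F̃(P) equals F applied to the coefficient of x^n in P, for every polynomial P ∈ A[x] and every n. Then f̃ is a left {g̃, h̃}-derivation on the polynomial algebra A[x]. -/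
/-- if `f` is a left `{g,h}`-derivation on `A`, then the coefficientwise
extensions `f̃, g̃, h̃` to the polynomial algebra `A[x]` make `f̃` a left
`{g̃, h̃}`-derivation. -/
theorem left_gh_derivation_polynomial
    {C A : Type*} [CommRing C] [Ring A] [Algebra C A]
    (f g h : A →ₗ[C] A)
    (hf : ∀ a b : A, f (a * b) = a * g b + b * h a ∧ f (a * b) = a * h b + b * g a)
    (ft gt ht : Polynomial A →ₗ[C] Polynomial A)
    (hft : ∀ (P : Polynomial A) (n : ℕ), (ft P).coeff n = f (P.coeff n))
    (hgt : ∀ (P : Polynomial A) (n : ℕ), (gt P).coeff n = g (P.coeff n))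
    (hht : ∀ (P : Polynomial A) (n : ℕ), (ht P).coeff n = h (P.coeff n)) :
    ∀ P Q : Polynomial A, ft (P * Q) = P * gt Q + Q * ht P ∧
      ft (P * Q) = P * ht Q + Q * gt P := by
  intro P Q
  have key : ∀ (u v : A →ₗ[C] A),
      (∀ a b : A, f (a * b) = a * u b + b * v a) →
      ∀ n, (ft (P * Q)).coeff n =
        ∑ p ∈ Finset.HasAntidiagonal.antidiagonal n, (P.coeff p.1 * u (Q.coeff p.2)
          + Q.coeff p.2 * v (P.coeff p.1)) := by
    intro u v huv n
    rw [hft, Polynomial.coeff_mul, map_sum]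
    exact Finset.sum_congr rfl fun p _ => huv _ _
  constructor
  · ext n
    rw [key g h (fun a b => (hf a b).1) n, Polynomial.coeff_add,
      Polynomial.coeff_mul, Polynomial.coeff_mul, Finset.sum_add_distrib]
    congr 1
    · exact Finset.sum_congr rfl fun p _ => by rw [hgt]
    · simp only [hht]
      exact (Finset.Nat.sum_antidiagonal_swap
        (f := fun p => Q.coeff p.1 * h (P.coeff p.2)))
  · ext n
    rw [key h g (fun a b => (hf a b).2) n, Polynomial.coeff_add,
      Polynomial.coeff_mul, Polynomial.coeff_mul, Finset.sum_add_distrib]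
    congr 1
    · exact Finset.sum_congr rfl fun p _ => by rw [hht]
    · simp only [hgt]
      exact (Finset.Nat.sum_antidiagonal_swap
        (f := fun p => Q.coeff p.1 * g (P.coeff p.2)))
end

section
/- Let A be an algebra over a commutative ring C and let f, g, h : A → A be C-linear maps such that f is a Jordan left {g,h}-derivation. For a linear map F : A → A, let F̃ : A[x] → A[x] be the linear map applying F coefficientwise, i.e., the coefficient of x^n in F̃(P) equals F applied to the coefficient of x^n in P, for every polynomial P ∈ A[x] and every n. Then f̃ is a Jordan left {g̃, h̃}-derivation on the polynomial algebra A[x]. -/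
/-- if `f` is a Jordan left `{g,h}`-derivation on `A`, then the
coefficientwise extensions `f̃, g̃, h̃` to the polynomial algebra `A[x]` make `f̃` a
Jordan left `{g̃, h̃}`-derivation. -/
theorem jordan_left_gh_derivation_polynomial
    {C A : Type*} [CommRing C] [Ring A] [Algebra C A]
    (f g h : A →ₗ[C] A)
    (hf : ∀ a b : A, f (a * b + b * a) = 2 • (a * g b + b * h a))
    (ft gt ht : Polynomial A →ₗ[C] Polynomial A)
    (hft : ∀ (P : Polynomial A) (n : ℕ), (ft P).coeff n = f (P.coeff n))
    (hgt : ∀ (P : Polynomial A) (n : ℕ), (gt P).coeff n = g (P.coeff n))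
    (hht : ∀ (P : Polynomial A) (n : ℕ), (ht P).coeff n = h (P.coeff n)) :
    ∀ P Q : Polynomial A, ft (P * Q + Q * P) = 2 • (P * gt Q + Q * ht P) := by
  intro P Q
  ext n
  rw [hft, Polynomial.coeff_smul, Polynomial.coeff_add, Polynomial.coeff_add,
    Polynomial.coeff_mul, Polynomial.coeff_mul, Polynomial.coeff_mul, Polynomial.coeff_mul]
  have hQP : ∑ p ∈ Finset.HasAntidiagonal.antidiagonal n, Q.coeff p.1 * P.coeff p.2
      = ∑ p ∈ Finset.HasAntidiagonal.antidiagonal n, Q.coeff p.2 * P.coeff p.1 := by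
    rw [← Finset.Nat.sum_antidiagonal_swap]; rfl
  have hQh : ∑ p ∈ Finset.HasAntidiagonal.antidiagonal n, Q.coeff p.1 * (ht P).coeff p.2
      = ∑ p ∈ Finset.HasAntidiagonal.antidiagonal n, Q.coeff p.2 * (ht P).coeff p.1 := by
    rw [← Finset.Nat.sum_antidiagonal_swap]; rfl
  rw [hQP, hQh, ← Finset.sum_add_distrib, map_sum, smul_add, Finset.smul_sum,
    Finset.smul_sum, ← Finset.sum_add_distrib]
  refine Finset.sum_congr rfl fun p _ => ?_
  rw [hf, hgt, hht, smul_add]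
end

section
/- Let ℍ_ℝ be the algebra of real quaternions and let f, g, h : ℍ_ℝ → ℍ_ℝ be ℝ-linear maps such that f is a Jordan left {g,h}-derivation. Then f is a left {g,h}-derivation if and only if f(i) = f(j) = f(k) = 0. -/
open scoped Quaternion

lemma quat_half {x y : ℍ[ℝ]} (hxy : x + x = y + y) : x = y := by
  have h2 : (2:ℝ) • x = (2:ℝ) • y := by rw [two_smul, two_smul]; exact hxy
  exact smul_right_injective ℍ[ℝ] two_ne_zero h2

lemma quat_decomp (p : ℍ[ℝ]) :
    p = p.re • 1 + p.imI • ⟨0,1,0,0⟩ + p.imJ • ⟨0,0,1,0⟩ + p.imK • ⟨0,0,0,1⟩ := by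
  ext <;> change _ = _ • _ + _ • _ + _ • _ + _ • _ <;> simp

lemma quat_anti_jk : (⟨0,0,1,0⟩ : ℍ[ℝ]) * ⟨0,0,0,1⟩ + (⟨0,0,0,1⟩ : ℍ[ℝ]) * ⟨0,0,1,0⟩ = 0 := by
  ext <;> simp

lemma quat_anti_ki : (⟨0,0,0,1⟩ : ℍ[ℝ]) * ⟨0,1,0,0⟩ + (⟨0,1,0,0⟩ : ℍ[ℝ]) * ⟨0,0,0,1⟩ = 0 := by
  ext <;> simp

lemma quat_anti_ij : (⟨0,1,0,0⟩ : ℍ[ℝ]) * ⟨0,0,1,0⟩ + (⟨0,0,1,0⟩ : ℍ[ℝ]) * ⟨0,1,0,0⟩ = 0 := by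
  ext <;> simp

lemma quat_aux (f g h : ℍ[ℝ] →ₗ[ℝ] ℍ[ℝ])
    (hf : ∀ p q : ℍ[ℝ], f (p * q + q * p) = 2 • (p * g q + q * h p))
    (hi : f (⟨0, 1, 0, 0⟩ : ℍ[ℝ]) = 0) (hj : f (⟨0, 0, 1, 0⟩ : ℍ[ℝ]) = 0)
    (hk : f (⟨0, 0, 0, 1⟩ : ℍ[ℝ]) = 0) :
    ∀ p q : ℍ[ℝ], f (p * q) = p * g q + q * h p := by
  have key : ∀ p q : ℍ[ℝ], f (p*q) + f (q*p) = (p * g q + q * h p) + (p * g q + q * h p) := by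
    intro p q; rw [← map_add, hf p q, two_smul]
  have H0b : ∀ q : ℍ[ℝ], f (1 * q) = 1 * g q + q * h 1 := by
    intro q
    apply quat_half
    simpa [one_mul, mul_one] using key 1 q
  have Ha1 : ∀ p : ℍ[ℝ], f (p * 1) = p * g 1 + 1 * h p := by
    intro p
    apply quat_half
    simpa [one_mul, mul_one] using key p 1
  have Haa : ∀ p : ℍ[ℝ], f (p * p) = p * g p + p * h p := by
    intro p; exact quat_half (key p p)
  have distinct : ∀ a b c : ℍ[ℝ], a * b = c → b * a = -c → f c = 0 →
      f (a * b) = a * g b + b * h a := by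
    intro a b c hab hba hc
    have hk2 := key a b
    rw [hab, hba, map_neg, hc, neg_zero, add_zero] at hk2
    have hr : a * g b + b * h a = 0 := by
      apply quat_half
      rw [add_zero]
      exact hk2.symm
    rw [hab, hc, hr]
  -- products of the quaternion units
  have pij : (⟨0,1,0,0⟩ : ℍ[ℝ]) * ⟨0,0,1,0⟩ = ⟨0,0,0,1⟩ := by ext <;> simp
  have pji : (⟨0,0,1,0⟩ : ℍ[ℝ]) * ⟨0,1,0,0⟩ = -⟨0,0,0,1⟩ := by ext <;> simp
  have pjk : (⟨0,0,1,0⟩ : ℍ[ℝ]) * ⟨0,0,0,1⟩ = ⟨0,1,0,0⟩ := by ext <;> simp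
  have pkj : (⟨0,0,0,1⟩ : ℍ[ℝ]) * ⟨0,0,1,0⟩ = -⟨0,1,0,0⟩ := by ext <;> simp
  have pki : (⟨0,0,0,1⟩ : ℍ[ℝ]) * ⟨0,1,0,0⟩ = ⟨0,0,1,0⟩ := by ext <;> simp
  have pik : (⟨0,1,0,0⟩ : ℍ[ℝ]) * ⟨0,0,0,1⟩ = -⟨0,0,1,0⟩ := by ext <;> simp
  set P : ℍ[ℝ] → ℍ[ℝ] → Prop := fun p q => f (p * q) = p * g q + q * h p with hP
  have addQ : ∀ p q₁ q₂ : ℍ[ℝ], P p q₁ → P p q₂ → P p (q₁ + q₂) := by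
    intro p q₁ q₂ h1 h2
    simp only [hP] at *
    rw [mul_add, map_add, h1, h2, map_add, mul_add, add_mul]
    abel
  have smulQ : ∀ (c : ℝ) (p q : ℍ[ℝ]), P p q → P p (c • q) := by
    intro c p q h1
    simp only [hP] at *
    rw [mul_smul_comm, map_smul, h1, map_smul, mul_smul_comm, smul_mul_assoc, smul_add]
  have addP : ∀ p₁ p₂ q : ℍ[ℝ], P p₁ q → P p₂ q → P (p₁ + p₂) q := by
    intro p₁ p₂ q h1 h2
    simp only [hP] at *
    rw [add_mul, map_add, h1, h2, map_add, mul_add, add_mul]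
    abel
  have smulP : ∀ (c : ℝ) (p q : ℍ[ℝ]), P p q → P (c • p) q := by
    intro c p q h1
    simp only [hP] at *
    rw [smul_mul_assoc, map_smul, h1, map_smul, mul_smul_comm, smul_mul_assoc, smul_add]
  have decomp : ∀ p : ℍ[ℝ],
      p = p.re • 1 + p.imI • ⟨0,1,0,0⟩ + p.imJ • ⟨0,0,1,0⟩ + p.imK • ⟨0,0,0,1⟩ := by
    intro p; exact quat_decomp p
  have case_q : ∀ p : ℍ[ℝ], P p 1 → P p ⟨0,1,0,0⟩ → P p ⟨0,0,1,0⟩ → P p ⟨0,0,0,1⟩ →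
      ∀ q : ℍ[ℝ], P p q := by
    intro p h1 h2 h3 h4 q
    rw [decomp q]
    exact addQ _ _ _ (addQ _ _ _ (addQ _ _ _ (smulQ _ _ _ h1) (smulQ _ _ _ h2))
      (smulQ _ _ _ h3)) (smulQ _ _ _ h4)
  have P1 : ∀ q : ℍ[ℝ], P 1 q := by
    intro q
    exact case_q 1 (H0b 1) (H0b _) (H0b _) (H0b _) q
  have Pi : ∀ q : ℍ[ℝ], P ⟨0,1,0,0⟩ q := by
    refine case_q _ (Ha1 _) (Haa _) ?_ ?_
    · exact distinct _ _ _ pij pji hk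
    · exact distinct _ _ _ pik (by exact pki.trans (neg_neg _).symm) ((map_neg f _).trans ((congrArg Neg.neg hj).trans neg_zero))
  have Pj : ∀ q : ℍ[ℝ], P ⟨0,0,1,0⟩ q := by
    refine case_q _ (Ha1 _) ?_ (Haa _) ?_
    · exact distinct _ _ _ pji (by exact pij.trans (neg_neg _).symm) ((map_neg f _).trans ((congrArg Neg.neg hk).trans neg_zero))
    · exact distinct _ _ _ pjk pkj hi
  have Pk : ∀ q : ℍ[ℝ], P ⟨0,0,0,1⟩ q := by
    refine case_q _ (Ha1 _) ?_ ?_ (Haa _)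
    · exact distinct _ _ _ pki pik hj
    · exact distinct _ _ _ pkj (by exact pjk.trans (neg_neg _).symm) ((map_neg f _).trans ((congrArg Neg.neg hi).trans neg_zero))
  intro p q
  have : P p q := by
    rw [decomp p]
    exact addP _ _ _ (addP _ _ _ (addP _ _ _ (smulP _ _ _ (P1 q)) (smulP _ _ _ (Pi q)))
      (smulP _ _ _ (Pj q))) (smulP _ _ _ (Pk q))
  exact this

/-- a Jordan left `{g,h}`-derivation `f` on the real quaternions is a left
`{g,h}`-derivation if and only if `f i = f j = f k = 0`. -/
theorem jordan_left_gh_derivation_quaternion_left_iff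
    (f g h : ℍ[ℝ] →ₗ[ℝ] ℍ[ℝ])
    (hf : ∀ p q : ℍ[ℝ], f (p * q + q * p) = 2 • (p * g q + q * h p)) :
    (∀ p q : ℍ[ℝ], f (p * q) = p * g q + q * h p ∧
        f (p * q) = p * h q + q * g p) ↔
      (f (⟨0, 1, 0, 0⟩ : ℍ[ℝ]) = 0 ∧ f (⟨0, 0, 1, 0⟩ : ℍ[ℝ]) = 0 ∧
        f (⟨0, 0, 0, 1⟩ : ℍ[ℝ]) = 0) := by
  have zero_rhs : ∀ a b : ℍ[ℝ], a * b + b * a = 0 → a * g b + b * h a = 0 := by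
    intro a b hab
    have := hf a b
    rw [hab, map_zero] at this
    apply quat_half
    rw [← two_smul ℕ, ← this]
    simp
  have pij : (⟨0,1,0,0⟩ : ℍ[ℝ]) * ⟨0,0,1,0⟩ = ⟨0,0,0,1⟩ := by ext <;> simp
  have pjk : (⟨0,0,1,0⟩ : ℍ[ℝ]) * ⟨0,0,0,1⟩ = ⟨0,1,0,0⟩ := by ext <;> simp
  have pki : (⟨0,0,0,1⟩ : ℍ[ℝ]) * ⟨0,1,0,0⟩ = ⟨0,0,1,0⟩ := by ext <;> simp
  constructor
  · intro Hd
    refine ⟨?_, ?_, ?_⟩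
    · have h1 := (Hd ⟨0,0,1,0⟩ ⟨0,0,0,1⟩).1
      rw [← pjk]
      refine h1.trans ?_
      exact zero_rhs (⟨0,0,1,0⟩ : ℍ[ℝ]) ⟨0,0,0,1⟩ quat_anti_jk
    · have h1 := (Hd ⟨0,0,0,1⟩ ⟨0,1,0,0⟩).1
      rw [← pki]
      refine h1.trans ?_
      exact zero_rhs (⟨0,0,0,1⟩ : ℍ[ℝ]) ⟨0,1,0,0⟩ quat_anti_ki
    · have h1 := (Hd ⟨0,1,0,0⟩ ⟨0,0,1,0⟩).1
      rw [← pij]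
      refine h1.trans ?_
      exact zero_rhs (⟨0,1,0,0⟩ : ℍ[ℝ]) ⟨0,0,1,0⟩ quat_anti_ij
  · rintro ⟨hi, hj, hk⟩ p q
    have hf' : ∀ p q : ℍ[ℝ], f (p * q + q * p) = 2 • (p * h q + q * g p) := by
      intro p q
      have := hf q p
      rwa [add_comm (q * p), add_comm (q * g p)] at this
    exact ⟨quat_aux f g h hf hi hj hk p q, quat_aux f h g hf' hi hj hk p q⟩
end

section
/- Let ℍ_ℝ be the algebra of real quaternions. ℝ-linear maps f, g, h : ℍ_ℝ → ℍ_ℝ are such that f is a Jordan left {g,h}-derivation if and only if g = h and there exists a quaternion α ∈ ℍ_ℝ such that g(q) = qα and f(q) = 2qα for all q ∈ ℍ_ℝ. In particular, if f is a Jordan left {g,h}-derivation on ℍ_ℝ then f and g are right centralizers. -/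
open scoped Quaternion

noncomputable def QI : ℍ[ℝ] := ⟨0,1,0,0⟩
noncomputable def QJ : ℍ[ℝ] := ⟨0,0,1,0⟩
noncomputable def QK : ℍ[ℝ] := ⟨0,0,0,1⟩
@[simp] lemma QI_re : QI.re = 0 := rfl
@[simp] lemma QI_imI : QI.imI = 1 := rfl
@[simp] lemma QI_imJ : QI.imJ = 0 := rfl
@[simp] lemma QI_imK : QI.imK = 0 := rfl
@[simp] lemma QJ_re : QJ.re = 0 := rfl
@[simp] lemma QJ_imI : QJ.imI = 0 := rfl
@[simp] lemma QJ_imJ : QJ.imJ = 1 := rfl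
@[simp] lemma QJ_imK : QJ.imK = 0 := rfl
@[simp] lemma QK_re : QK.re = 0 := rfl
@[simp] lemma QK_imI : QK.imI = 0 := rfl
@[simp] lemma QK_imJ : QK.imJ = 0 := rfl
@[simp] lemma QK_imK : QK.imK = 1 := rfl

lemma two_smul_cancel {a b : ℍ[ℝ]} (h : (2:ℕ) • a = 2 • b) : a = b :=
  by
  have := congrArg (fun x => (2:ℝ)⁻¹ • x) h
  simpa [← Nat.cast_smul_eq_nsmul ℝ, smul_smul] using this

/-- `f` is a Jordan left `{g,h}`-derivation on the real quaternions iff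
`g = h` and there is a quaternion `α` with `g q = q * α` and `f q = 2 • (q * α)`;
in particular `f` and `g` are then right centralizers. -/
theorem jordan_left_gh_derivation_quaternion_iff
    (f g h : ℍ[ℝ] →ₗ[ℝ] ℍ[ℝ]) :
    ((∀ p q : ℍ[ℝ], f (p * q + q * p) = 2 • (p * g q + q * h p)) ↔
      (g = h ∧ ∃ α : ℍ[ℝ], (∀ q : ℍ[ℝ], g q = q * α) ∧
        (∀ q : ℍ[ℝ], f q = 2 • (q * α)))) ∧
    ((∀ p q : ℍ[ℝ], f (p * q + q * p) = 2 • (p * g q + q * h p)) →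
      (∀ p q : ℍ[ℝ], f (p * q) = p * f q) ∧
      (∀ p q : ℍ[ℝ], g (p * q) = p * g q)) := by
  have main : ((∀ p q : ℍ[ℝ], f (p * q + q * p) = 2 • (p * g q + q * h p)) ↔
      (g = h ∧ ∃ α : ℍ[ℝ], (∀ q : ℍ[ℝ], g q = q * α) ∧
        (∀ q : ℍ[ℝ], f q = 2 • (q * α)))) := by
    constructor
    · intro H
      have sym : ∀ p q : ℍ[ℝ], p * g q + q * h p = q * g p + p * h q := by
        intro p q
        apply two_smul_cancel
        rw [← H p q, ← H q p, add_comm (p * q)]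
      have hd : ∀ p q : ℍ[ℝ], p * (g q - h q) = q * (g p - h p) := by
        intro p q
        rw [mul_sub, mul_sub, sub_eq_sub_iff_add_eq_add]
        exact sym p q
      have hd1 : ∀ q : ℍ[ℝ], g q - h q = q * (g 1 - h 1) := by
        intro q
        have := hd 1 q
        rwa [one_mul] at this
      have e0 : g 1 - h 1 = 0 := by
        have h2 := hd QI QJ
        rw [hd1 QI, hd1 QJ, ← mul_assoc, ← mul_assoc] at h2
        have hij : QI * QJ = QK := by ext <;> simp [Quaternion.re_mul, Quaternion.imI_mul, Quaternion.imJ_mul, Quaternion.imK_mul]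
        have hji : QJ * QI = -QK := by ext <;> simp [Quaternion.re_mul, Quaternion.imI_mul, Quaternion.imJ_mul, Quaternion.imK_mul]
        rw [hij, hji, neg_mul] at h2
        have hz : QK * (g 1 - h 1) = 0 := by
          apply two_smul_cancel
          rw [two_smul, smul_zero]
          nth_rewrite 2 [h2]
          rw [add_neg_cancel]
        have hK : (QK : ℍ[ℝ]) ≠ 0 := by
          intro hc
          have := congrArg QuaternionAlgebra.imK hc
          simp [QK] at this
        rcases mul_eq_zero.mp hz with hc | hc
        · exact absurd hc hK
        · exact hc
      have gh : g = h := by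
        refine LinearMap.ext fun q => ?_
        have := hd1 q
        rw [e0, mul_zero, sub_eq_zero] at this
        exact this
      rw [← gh] at H
      have E1 : ∀ q : ℍ[ℝ], f q = g q + q * g 1 := by
        intro q
        apply two_smul_cancel
        have := H 1 q
        rwa [one_mul, mul_one, map_add, ← two_smul ℕ (f q), one_mul] at this
      have f1 : f 1 = 2 • g 1 := by
        rw [E1 1, one_mul]
        rw [two_smul]
      have key : ∀ u : ℍ[ℝ], u * u = -1 → g u = u * g 1 := by
        intro u hu
        have hq := H u u
        rw [hu, map_add, map_neg, ← two_smul ℕ (-(f 1)), f1] at hq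
        have hq2 : -(2 • g 1) = u * g u + u * g u := two_smul_cancel (by
          rw [← hq])
        have hq3 : -(g 1) = u * g u := by
          apply two_smul_cancel
          rw [smul_neg, hq2, two_smul]
        have := congrArg (fun x => u * x) hq3
        simp only [mul_neg, ← mul_assoc, hu, neg_mul, one_mul, neg_neg] at this
        exact neg_injective this.symm
      have gi := key QI (by ext <;> simp [Quaternion.re_mul, Quaternion.imI_mul, Quaternion.imJ_mul, Quaternion.imK_mul])
      have gj := key QJ (by ext <;> simp [Quaternion.re_mul, Quaternion.imI_mul, Quaternion.imJ_mul, Quaternion.imK_mul])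
      have gk := key QK (by ext <;> simp [Quaternion.re_mul, Quaternion.imI_mul, Quaternion.imJ_mul, Quaternion.imK_mul])
      have gval : ∀ q : ℍ[ℝ], g q = q * g 1 := by
        intro q
        have hqd : q = q.re • 1 + q.imI • QI + q.imJ • QJ + q.imK • QK := by
          ext <;> simp [Quaternion.re_smul]
        calc g q = g (q.re • 1 + q.imI • QI + q.imJ • QJ + q.imK • QK) := by rw [← hqd]
          _ = q.re • g 1 + q.imI • g QI + q.imJ • g QJ + q.imK • g QK := by
              simp [map_add, map_smul]
          _ = (q.re • 1 + q.imI • QI + q.imJ • QJ + q.imK • QK) * g 1 := by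
              rw [gi, gj, gk]
              simp [add_mul, smul_mul_assoc]
          _ = q * g 1 := by rw [← hqd]
      exact ⟨gh, g 1, gval, fun q => by rw [E1 q, gval q, two_smul]⟩
    · rintro ⟨gh, α, hg, hf⟩
      intro p q
      rw [hf, hg, ← gh, hg]
      congr 1
      rw [add_mul, mul_assoc, mul_assoc]
  refine ⟨main, fun H => ?_⟩
  obtain ⟨gh, α, hg, hf⟩ := main.mp H
  constructor <;> intro p q
  · rw [hf, hf, mul_assoc, two_smul, two_smul, mul_add]
  · rw [hg, hg, mul_assoc]
end

section
/- Let D be a finite-dimensional division algebra over the real numbers ℝ that is not commutative. If f, g : D → D are ℝ-linear maps such that f is a left {g,g}-derivation, then f = 0 and g = 0. -/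
/-- if `D` is a noncommutative finite-dimensional division algebra over `ℝ`
and `f` is a left `{g,g}`-derivation on `D`, then `f = 0` and `g = 0`. -/
theorem left_gg_derivation_real_division_algebra_eq_zero
    {D : Type*} [DivisionRing D] [Algebra ℝ D] [FiniteDimensional ℝ D]
    (hnc : ∃ a b : D, a * b ≠ b * a)
    (f g : D →ₗ[ℝ] D)
    (hf : ∀ a b : D, f (a * b) = a * g b + b * g a) :
    f = 0 ∧ g = 0 := by
  obtain ⟨a₀, b₀, hab⟩ := hnc
  set c : D := g 1 with hcdef
  have hg : ∀ a : D, g a = f a - a * c := by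
    intro a
    have h := hf a 1
    simp only [mul_one, one_mul] at h
    rw [eq_sub_iff_add_eq, h, add_comm]
  -- S2 : (ab - ba) * f b = 2 (ab - ba) b c
  have S2 : ∀ a b : D, (a*b - b*a) * f b = (a*b - b*a) * (b*c) + (a*b - b*a) * (b*c) := by
    intro a b
    have e1 := hf (a*b) b
    have e2 := hf a (b*b)
    have e3 := hf a b
    have e4 := hf b b
    rw [mul_assoc] at e1
    simp only [hg] at e1 e2 e3 e4
    rw [e3] at e1
    rw [e4] at e2
    rw [e1] at e2
    linear_combination (norm := noncomm_ring) -e2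
  -- S1 : (ab - ba) * f a = (a²b - ba²) c
  have S1 : ∀ a b : D, (a*b - b*a) * f a = (a*(a*b) - b*(a*a)) * c := by
    intro a b
    have e1 := hf (a*b) a
    have e2 := hf a (b*a)
    have e3 := hf a b
    have e4 := hf b a
    rw [mul_assoc] at e1
    simp only [hg] at e1 e2 e3 e4
    rw [e3] at e1
    rw [e4] at e2
    rw [e1] at e2
    linear_combination (norm := noncomm_ring) e2
  -- value of f on noncentral elements
  have hfval : ∀ a b : D, a*b ≠ b*a → f b = b*c + b*c := by
    intro a b hne
    have h := S2 a b
    have hu : a*b - b*a ≠ 0 := sub_ne_zero.mpr hne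
    have : (a*b - b*a) * f b = (a*b - b*a) * (b*c + b*c) := by
      rw [h, mul_add]
    exact mul_left_cancel₀ hu this
  -- the commutator relation when c ≠ 0
  have hcancel : ∀ a b : D, a*b ≠ b*a →
      (a*(a*b - b*a) - (a*b - b*a)*a) * c = 0 := by
    intro a b hne
    have hfa : f a = a*c + a*c := hfval b a (fun h => hne h.symm)
    have h := S1 a b
    rw [hfa] at h
    linear_combination (norm := noncomm_ring) -h
  by_cases hc0 : c = 0
  · -- main case : c = 0, so g = f and f vanishes
    have hgf : ∀ a : D, g a = f a := by
      intro a; rw [hg a, hc0, mul_zero, sub_zero]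
    have hf0 : ∀ b : D, (∃ a : D, a*b ≠ b*a) → f b = 0 := by
      rintro b ⟨a, hne⟩
      have h := hfval a b hne
      rw [hc0, mul_zero, add_zero] at h
      exact h
    have ha₀ : f a₀ = 0 := hf0 a₀ ⟨b₀, Ne.symm hab⟩
    have ha₀ne : a₀ ≠ 0 := by
      rintro rfl; simp at hab
    have hfz : ∀ z : D, f z = 0 := by
      intro z
      by_cases hz : ∃ w : D, w*z ≠ z*w
      · exact hf0 z hz
      · push_neg at hz
        by_cases hz0 : z = 0
        · rw [hz0, map_zero]
        · have hnc' : (z*a₀)*b₀ ≠ b₀*(z*a₀) := by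
            intro h
            have h1 : z*(a₀*b₀) = z*(b₀*a₀) := by
              calc z*(a₀*b₀) = (z*a₀)*b₀ := by rw [mul_assoc]
                _ = b₀*(z*a₀) := h
                _ = (b₀*z)*a₀ := by rw [mul_assoc]
                _ = (z*b₀)*a₀ := by rw [hz b₀]
                _ = z*(b₀*a₀) := by rw [mul_assoc]
            exact hab (mul_left_cancel₀ hz0 h1)
          have h2 : f (z*a₀) = 0 := hf0 (z*a₀) ⟨b₀, fun h => hnc' h.symm⟩
          have h3 := hf z a₀
          rw [hgf, hgf, ha₀, mul_zero, h2] at h3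
          have h4 : a₀ * f z = 0 := by
            have := h3.symm
            rwa [zero_add] at this
          rcases mul_eq_zero.mp h4 with h | h
          · exact absurd h ha₀ne
          · exact h
    constructor
    · ext x; exact hfz x
    · ext x; rw [hgf x]; exact hfz x
  · -- case c ≠ 0 : contradiction with noncommutativity
    exfalso
    have HH : ∀ b : D, a₀*(a₀*b - b*a₀) = (a₀*b - b*a₀)*a₀ := by
      intro b
      by_cases h : a₀*b = b*a₀
      · rw [h, sub_self, mul_zero, zero_mul]
      · have h1 := hcancel a₀ b h
        rcases mul_eq_zero.mp h1 with h2 | h2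
        · exact sub_eq_zero.mp h2
        · exact absurd h2 hc0
    have charD : CharZero D := charZero_of_injective_algebraMap (algebraMap ℝ D).injective
    have key : ∀ x y : D, (a₀*x - x*a₀) * (a₀*y - y*a₀) = 0 := by
      intro x y
      have h1 := HH (x*y)
      have h2 := HH x
      have h3 := HH y
      have h4 : (2:D) * ((a₀*x - x*a₀) * (a₀*y - y*a₀)) = 0 := by
        linear_combination (norm := noncomm_ring) h1 - h2 * y - x * h3
      rcases mul_eq_zero.mp h4 with h | h
      · exact absurd h two_ne_zero
      · exact h
    have hk := key b₀ b₀
    rcases mul_eq_zero.mp hk with h | h <;>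
      exact hab (sub_eq_zero.mp h)
end
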